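/- Let m ≥ 2 be an integer and β_n := 2/(n(n+1)). The function θ ↦ (1/4)·m(m+1)(m−1)·cos(mθ) does not belong to the range of L[β_m]; that is, there exist no λ_1, λ_2 ∈ ℝ and real coefficients (a_n)_{n≥2} with ∑_{n≥2} n³|a_n| < ∞ such that (1/4)m(m+1)(m−1)cos(mθ) = (1/2)λ_1 + λ_2 cos θ + (1/4)∑_{n≥2} a_n n(n+1)(n−1)(β_m − β_n) cos(nθ) for all θ. Since this function equals ∂_β L[β](0,0,w^{m+1})|_{β=β_m}, the transversality condition of the Crandall–Rabinowitz theorem holds at β = β_m. -/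

import Mathlib

open Real intervalIntegral

lemma int_cos_int (k : ℤ) (hk : k ≠ 0) :
    ∫ x in (0:ℝ)..(2*π), Real.cos ((k:ℝ) * x) = 0 := by
  have hkr : (k:ℝ) ≠ 0 := Int.cast_ne_zero.mpr hk
  rw [intervalIntegral.integral_comp_mul_left Real.cos hkr, integral_cos]
  have h2 : (k:ℝ) * (2*π) = ((2*k : ℤ) : ℝ) * π := by push_cast; ring
  rw [h2, Real.sin_int_mul_pi]
  simp

lemma cos_mul_cos_eq (p q x : ℝ) :
    Real.cos (p*x) * Real.cos (q*x)
      = (Real.cos ((p+q)*x) + Real.cos ((p-q)*x)) / 2 := by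
  rw [add_mul, sub_mul, Real.cos_add, Real.cos_sub]; ring

lemma cont_cosmul (c : ℝ) : Continuous fun x => Real.cos (c * x) :=
  Real.continuous_cos.comp (continuous_const.mul continuous_id)

lemma orth_ne (j k : ℕ) (hjk : j ≠ k) :
    ∫ x in (0:ℝ)..(2*π), Real.cos ((j:ℝ) * x) * Real.cos ((k:ℝ) * x) = 0 := by
  have hsum : ∫ x in (0:ℝ)..(2*π), Real.cos (((j:ℝ)+(k:ℝ)) * x) = 0 := by
    have h : ((j:ℝ)+(k:ℝ)) = (((j:ℤ)+(k:ℤ) : ℤ) : ℝ) := by push_cast; ring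
    rw [h]; refine int_cos_int _ ?_; omega
  have hdiff : ∫ x in (0:ℝ)..(2*π), Real.cos (((j:ℝ)-(k:ℝ)) * x) = 0 := by
    have h : ((j:ℝ)-(k:ℝ)) = (((j:ℤ)-(k:ℤ) : ℤ) : ℝ) := by push_cast; ring
    rw [h]; refine int_cos_int _ ?_; omega
  simp only [cos_mul_cos_eq]
  rw [intervalIntegral.integral_div, intervalIntegral.integral_add
      ((cont_cosmul _).intervalIntegrable _ _) ((cont_cosmul _).intervalIntegrable _ _),
    hsum, hdiff]
  norm_num

lemma orth_self (k : ℕ) (hk : k ≠ 0) :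
    ∫ x in (0:ℝ)..(2*π), Real.cos ((k:ℝ) * x) * Real.cos ((k:ℝ) * x) = π := by
  have hsum : ∫ x in (0:ℝ)..(2*π), Real.cos (((k:ℝ)+(k:ℝ)) * x) = 0 := by
    have h : ((k:ℝ)+(k:ℝ)) = (((k:ℤ)+(k:ℤ) : ℤ) : ℝ) := by push_cast; ring
    rw [h]; refine int_cos_int _ ?_; omega
  simp only [cos_mul_cos_eq]
  rw [intervalIntegral.integral_div, intervalIntegral.integral_add
      ((cont_cosmul _).intervalIntegrable _ _) ((cont_cosmul _).intervalIntegrable _ _),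
    hsum]
  simp only [sub_self, zero_mul, Real.cos_zero]
  simp

theorem transversality_condition (m : ℕ) (hm : 2 ≤ m) :
    ¬ ∃ (lam1 lam2 : ℝ) (a : ℕ → ℝ), a 0 = 0 ∧ a 1 = 0 ∧
        Summable (fun n : ℕ => (n : ℝ) ^ 3 * |a n|) ∧
        ∀ θ : ℝ,
          1 / 4 * (m : ℝ) * ((m : ℝ) + 1) * ((m : ℝ) - 1) * Real.cos ((m : ℝ) * θ)
            = 1 / 2 * lam1 + lam2 * Real.cos θ
              + 1 / 4 * (∑' n : ℕ,
                  a n * (n : ℝ) * ((n : ℝ) + 1) * ((n : ℝ) - 1)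
                    * (2 / ((m : ℝ) * ((m : ℝ) + 1)) - 2 / ((n : ℝ) * ((n : ℝ) + 1)))
                    * Real.cos ((n : ℝ) * θ)) := by
  rintro ⟨lam1, lam2, a, ha0, ha1, hsum3, h⟩
  set c : ℕ → ℝ := fun n =>
    a n * (n : ℝ) * ((n : ℝ) + 1) * ((n : ℝ) - 1)
      * (2 / ((m : ℝ) * ((m : ℝ) + 1)) - 2 / ((n : ℝ) * ((n : ℝ) + 1))) with hc_def
  -- bound on |c n|
  have hcb : ∀ n, |c n| ≤ 4 * ((n : ℝ) ^ 3 * |a n|) := by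
    intro n
    rcases Nat.eq_zero_or_pos n with h0 | h1
    · simp [hc_def, h0, ha0]
    · have hn1 : (1:ℝ) ≤ (n:ℝ) := by exact_mod_cast h1
      have hβn : |2 / ((n : ℝ) * ((n : ℝ) + 1))| ≤ 1 := by
        rw [abs_of_nonneg (by positivity)]
        rw [div_le_one (by nlinarith)]
        nlinarith
      have hβm : |2 / ((m : ℝ) * ((m : ℝ) + 1))| ≤ 1 := by
        have hm1 : (2:ℝ) ≤ (m:ℝ) := by exact_mod_cast hm
        rw [abs_of_nonneg (by positivity)]
        rw [div_le_one (by nlinarith)]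
        nlinarith
      have hd : |2 / ((m : ℝ) * ((m : ℝ) + 1)) - 2 / ((n : ℝ) * ((n : ℝ) + 1))| ≤ 2 := by
        calc |2 / ((m : ℝ) * ((m : ℝ) + 1)) - 2 / ((n : ℝ) * ((n : ℝ) + 1))|
            ≤ |2 / ((m : ℝ) * ((m : ℝ) + 1))| + |2 / ((n : ℝ) * ((n : ℝ) + 1))| := abs_sub _ _
          _ ≤ 2 := by linarith
      have habs : |c n| = |a n| * (n:ℝ) * ((n:ℝ)+1) * |(n:ℝ)-1|
          * |2 / ((m : ℝ) * ((m : ℝ) + 1)) - 2 / ((n : ℝ) * ((n : ℝ) + 1))| := by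
        simp only [hc_def, abs_mul]
        rw [abs_of_nonneg (by positivity : (0:ℝ) ≤ (n:ℝ)),
          abs_of_nonneg (by positivity : (0:ℝ) ≤ (n:ℝ)+1)]
      have hnm1 : |(n:ℝ)-1| ≤ (n:ℝ) := by
        rw [abs_of_nonneg (by linarith)]; linarith
      rw [habs]
      have h1' : |a n| * (n:ℝ) * ((n:ℝ)+1) * |(n:ℝ)-1| ≤ |a n| * (n:ℝ) * (2*(n:ℝ)) * (n:ℝ) := by
        have e2 : ((n:ℝ)+1) ≤ 2*(n:ℝ) := by linarith
        gcongr
      have h2' : (0:ℝ) ≤ |a n| * (n:ℝ) * ((n:ℝ)+1) * |(n:ℝ)-1| := by positivity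
      nlinarith [abs_nonneg (2 / ((m : ℝ) * ((m : ℝ) + 1)) - 2 / ((n : ℝ) * ((n : ℝ) + 1))),
        abs_nonneg (a n)]
  have hc_sum : Summable fun n => |c n| :=
    Summable.of_nonneg_of_le (fun n => abs_nonneg _) hcb (hsum3.mul_left 4)
  have hcm : c m = 0 := by simp [hc_def]
  -- pointwise summability
  have hpt : ∀ θ : ℝ, Summable fun n => c n * Real.cos ((n:ℝ) * θ) := by
    intro θ
    refine Summable.of_norm_bounded hc_sum fun n => ?_
    rw [norm_mul, Real.norm_eq_abs, Real.norm_eq_abs]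
    calc |c n| * |Real.cos ((n:ℝ)*θ)| ≤ |c n| * 1 :=
        mul_le_mul_of_nonneg_left (Real.abs_cos_le_one _) (abs_nonneg _)
      _ = |c n| := mul_one _
  set g : ℝ → ℝ := fun θ => ∑' n, c n * Real.cos ((n:ℝ) * θ) with hg_def
  have hg_cont : Continuous g := by
    refine continuous_tsum (fun n => continuous_const.mul (cont_cosmul _)) hc_sum fun n x => ?_
    rw [norm_mul, Real.norm_eq_abs, Real.norm_eq_abs]
    calc |c n| * |Real.cos ((n:ℝ)*x)| ≤ |c n| * 1 :=
        mul_le_mul_of_nonneg_left (Real.abs_cos_le_one _) (abs_nonneg _)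
      _ = |c n| := mul_one _
  -- integral of g * cos(mθ) is zero
  have hkey : HasSum (fun n => ∫ θ in (0:ℝ)..(2*π),
        c n * Real.cos ((n:ℝ)*θ) * Real.cos ((m:ℝ)*θ))
      (∫ θ in (0:ℝ)..(2*π), g θ * Real.cos ((m:ℝ)*θ)) := by
    refine intervalIntegral.hasSum_integral_of_dominated_convergence
      (fun n _ => |c n|) (fun n => ?_) (fun n => ?_) ?_ ?_ ?_
    · exact ((continuous_const.mul (cont_cosmul _)).mul (cont_cosmul _)).aestronglyMeasurable
    · refine Filter.Eventually.of_forall fun t _ => ?_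
      rw [norm_mul, norm_mul, Real.norm_eq_abs, Real.norm_eq_abs, Real.norm_eq_abs]
      calc |c n| * |Real.cos ((n:ℝ)*t)| * |Real.cos ((m:ℝ)*t)|
          ≤ |c n| * 1 * 1 := by
            gcongr
            · exact Real.abs_cos_le_one _
            · exact Real.abs_cos_le_one _
        _ = |c n| := by ring
    · exact Filter.Eventually.of_forall fun t _ => hc_sum
    · exact intervalIntegrable_const
    · exact Filter.Eventually.of_forall fun t _ => ((hpt t).hasSum).mul_right _
  have hintn : ∀ n : ℕ, (∫ θ in (0:ℝ)..(2*π),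
      c n * Real.cos ((n:ℝ)*θ) * Real.cos ((m:ℝ)*θ)) = 0 := by
    intro n
    simp only [mul_assoc]
    rw [intervalIntegral.integral_const_mul]
    rcases eq_or_ne n m with rfl | hnm
    · rw [hcm, zero_mul]
    · rw [orth_ne n m hnm, mul_zero]
  have hg_int : (∫ θ in (0:ℝ)..(2*π), g θ * Real.cos ((m:ℝ)*θ)) = 0 := by
    have h0 : (fun n : ℕ => ∫ θ in (0:ℝ)..(2*π),
        c n * Real.cos ((n:ℝ)*θ) * Real.cos ((m:ℝ)*θ)) = fun _ => (0:ℝ) :=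
      funext hintn
    rw [h0] at hkey
    exact (hasSum_zero.unique hkey).symm
  -- multiply identity by cos(mθ)
  have h2 : ∀ θ : ℝ,
      (1/4*(m:ℝ)*((m:ℝ)+1)*((m:ℝ)-1)) * (Real.cos ((m:ℝ)*θ) * Real.cos ((m:ℝ)*θ))
        = (1/2*lam1) * Real.cos ((m:ℝ)*θ)
          + lam2 * (Real.cos θ * Real.cos ((m:ℝ)*θ))
          + 1/4 * (g θ * Real.cos ((m:ℝ)*θ)) := by
    intro θ
    linear_combination Real.cos ((m:ℝ)*θ) * h θ
  -- integrate over [0, 2π]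
  have hmne : m ≠ 0 := by omega
  have i1 : IntervalIntegrable (fun θ : ℝ => (1/2*lam1) * Real.cos ((m:ℝ)*θ))
      MeasureTheory.volume 0 (2*π) :=
    (continuous_const.mul (cont_cosmul _)).intervalIntegrable _ _
  have i2 : IntervalIntegrable (fun θ : ℝ => lam2 * (Real.cos θ * Real.cos ((m:ℝ)*θ)))
      MeasureTheory.volume 0 (2*π) :=
    (continuous_const.mul (Real.continuous_cos.mul (cont_cosmul _))).intervalIntegrable _ _
  have i3 : IntervalIntegrable (fun θ : ℝ => 1/4 * (g θ * Real.cos ((m:ℝ)*θ)))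
      MeasureTheory.volume 0 (2*π) :=
    (continuous_const.mul (hg_cont.mul (cont_cosmul _))).intervalIntegrable _ _
  have hcos0 : (∫ θ in (0:ℝ)..(2*π), Real.cos ((m:ℝ)*θ)) = 0 := by
    have hcast : ((m:ℕ):ℝ) = (((m:ℤ):ℤ):ℝ) := by push_cast; ring
    rw [hcast]
    exact int_cos_int m (by exact_mod_cast hmne)
  have h1m : (∫ θ in (0:ℝ)..(2*π), Real.cos θ * Real.cos ((m:ℝ)*θ)) = 0 := by
    have := orth_ne 1 m (by omega)
    simpa using this
  have hleft : (∫ θ in (0:ℝ)..(2*π),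
      (1/4*(m:ℝ)*((m:ℝ)+1)*((m:ℝ)-1)) * (Real.cos ((m:ℝ)*θ) * Real.cos ((m:ℝ)*θ)))
      = (1/4*(m:ℝ)*((m:ℝ)+1)*((m:ℝ)-1)) * π := by
    rw [intervalIntegral.integral_const_mul, orth_self m hmne]
  have hright : (∫ θ in (0:ℝ)..(2*π),
      ((1/2*lam1) * Real.cos ((m:ℝ)*θ) + lam2 * (Real.cos θ * Real.cos ((m:ℝ)*θ))
        + 1/4 * (g θ * Real.cos ((m:ℝ)*θ)))) = 0 := by
    rw [intervalIntegral.integral_add (i1.add i2) i3, intervalIntegral.integral_add i1 i2,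
      intervalIntegral.integral_const_mul, intervalIntegral.integral_const_mul,
      intervalIntegral.integral_const_mul, hcos0, h1m, hg_int]
    ring
  have hEq : (∫ θ in (0:ℝ)..(2*π),
      (1/4*(m:ℝ)*((m:ℝ)+1)*((m:ℝ)-1)) * (Real.cos ((m:ℝ)*θ) * Real.cos ((m:ℝ)*θ)))
      = (∫ θ in (0:ℝ)..(2*π),
      ((1/2*lam1) * Real.cos ((m:ℝ)*θ) + lam2 * (Real.cos θ * Real.cos ((m:ℝ)*θ))
        + 1/4 * (g θ * Real.cos ((m:ℝ)*θ)))) :=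
    intervalIntegral.integral_congr fun θ _ => h2 θ
  have hfinal : (1/4*(m:ℝ)*((m:ℝ)+1)*((m:ℝ)-1)) * π = 0 := by
    rw [← hleft, hEq, hright]
  have hm2 : (2:ℝ) ≤ (m:ℝ) := by exact_mod_cast hm
  have hC : 0 < 1/4*(m:ℝ)*((m:ℝ)+1)*((m:ℝ)-1) :=
    mul_pos (mul_pos (mul_pos (by norm_num : (0:ℝ) < 1/4) (by linarith)) (by linarith))
      (by linarith)
  have := mul_pos hC Real.pi_pos
  linarith
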